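/- Fix positive integers m and r, real numbers α > 0, y₀ > 0 and ε ∈ (0,1). For each l ∈ {1,…,m} let λ_l ∈ ℝ and let a_{l,i} ≥ 0, c_{l,i} ≥ 0 for i ∈ {1,…,r}. For y ∈ [y₀, ∞) and s ∈ [1−ε, 1+ε] define f_{y,s}(l) := ∑_{i=1}^r (a_{l,i}/c_{l,i})^α · 1{c_{l,i} > y·a_{l,i}} · 1{a_{l,i} > 0} · 1{c_{l,i} > s} (each summand being 0 when its indicators fail), and define S(y,s) := { l ∈ {1,…,m} : λ_l < f_{y,s}(l) }. Then the collection { S(y,s) : y ∈ [y₀,∞), s ∈ [1−ε,1+ε] } contains at most (m·r + 1)² distinct subsets of {1,…,m}. -/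

import Mathlib

/-- The picking bound from the proof of Proposition C.1 of the paper: the subgraph sets
`S(y,s) = {l : λ_l < f_{y,s}(l)}` of the two-parameter family of functions
`f_{y,s}(l) = ∑_i (a_{l,i}/c_{l,i})^α 1{c_{l,i} > y a_{l,i}} 1{a_{l,i} > 0} 1{c_{l,i} > s}`
pick out at most `(mr+1)²` distinct subsets of `{1,…,m}`. -/
theorem stmt8 (m r : ℕ) (hm : 0 < m) (hr : 0 < r)
    (α y₀ ε : ℝ) (hα : 0 < α) (hy₀ : 0 < y₀) (hε : ε ∈ Set.Ioo (0 : ℝ) 1)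
    (lam : Fin m → ℝ) (a c : Fin m → Fin r → ℝ)
    (ha : ∀ l i, 0 ≤ a l i) (hc : ∀ l i, 0 ≤ c l i) :
    Set.ncard { B : Set (Fin m) | ∃ y ∈ Set.Ici y₀, ∃ s ∈ Set.Icc (1 - ε) (1 + ε),
        B = {l : Fin m | lam l < ∑ i : Fin r,
          (a l i / c l i) ^ α * (if y * a l i < c l i then (1 : ℝ) else 0)
            * (if 0 < a l i then 1 else 0) * (if s < c l i then 1 else 0)} }
      ≤ (m * r + 1) ^ 2 := by
  classical
  set A : ℝ → Finset (Fin m × Fin r) :=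
    fun y => Finset.univ.filter (fun p => y * a p.1 p.2 < c p.1 p.2) with hA
  set Bf : ℝ → Finset (Fin m × Fin r) :=
    fun s => Finset.univ.filter (fun p => s < c p.1 p.2) with hB
  set Φ : Finset (Fin m × Fin r) × Finset (Fin m × Fin r) → Set (Fin m) :=
    fun P => {l : Fin m | lam l < ∑ i : Fin r,
        (a l i / c l i) ^ α * (if (l, i) ∈ P.1 then (1 : ℝ) else 0)
          * (if 0 < a l i then 1 else 0) * (if (l, i) ∈ P.2 then 1 else 0)} with hΦ
  have hsub : { B : Set (Fin m) | ∃ y ∈ Set.Ici y₀, ∃ s ∈ Set.Icc (1 - ε) (1 + ε),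
        B = {l : Fin m | lam l < ∑ i : Fin r,
          (a l i / c l i) ^ α * (if y * a l i < c l i then (1 : ℝ) else 0)
            * (if 0 < a l i then 1 else 0) * (if s < c l i then 1 else 0)} }
      ⊆ Φ '' ((A '' Set.Ici y₀) ×ˢ (Bf '' Set.Icc (1 - ε) (1 + ε))) := by
    rintro B ⟨y, hy, s, hs, rfl⟩
    refine ⟨(A y, Bf s), ⟨⟨y, hy, rfl⟩, ⟨s, hs, rfl⟩⟩, ?_⟩
    simp only [hΦ, hA, hB, Finset.mem_filter, Finset.mem_univ, true_and]
  -- antitone chains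
  have hAanti : ∀ y₁ y₂, y₁ ≤ y₂ → A y₂ ⊆ A y₁ := by
    intro y₁ y₂ h p hp
    simp only [hA, Finset.mem_filter, Finset.mem_univ, true_and] at hp ⊢
    exact lt_of_le_of_lt (mul_le_mul_of_nonneg_right h (ha p.1 p.2)) hp
  have hBanti : ∀ s₁ s₂, s₁ ≤ s₂ → Bf s₂ ⊆ Bf s₁ := by
    intro s₁ s₂ h p hp
    simp only [hB, Finset.mem_filter, Finset.mem_univ, true_and] at hp ⊢
    exact lt_of_le_of_lt h hp
  have key : ∀ (f : ℝ → Finset (Fin m × Fin r)) (T : Set ℝ),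
      (∀ x₁ x₂, x₁ ≤ x₂ → f x₂ ⊆ f x₁) → (f '' T).ncard ≤ m * r + 1 := by
    intro f T hmono
    have hfin : (f '' T).Finite := Set.toFinite _
    rw [Set.ncard_eq_toFinset_card' _]
    have : m * r + 1 = (Finset.Iic (m * r)).card := by
      rw [Nat.card_Iic]
    rw [this]
    apply Finset.card_le_card_of_injOn (fun F => F.card)
    · intro F hF
      simp only [Finset.mem_coe, Set.mem_toFinset, Set.mem_image] at hF
      obtain ⟨x, _, rfl⟩ := hF
      simp only [Finset.mem_coe, Finset.mem_Iic]
      calc (f x).card ≤ (Finset.univ : Finset (Fin m × Fin r)).card :=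
            Finset.card_le_card (Finset.subset_univ _)
        _ = m * r := by simp
    · intro F₁ h₁ F₂ h₂ hcard
      simp only [Finset.mem_coe, Set.mem_toFinset] at h₁ h₂
      obtain ⟨x₁, _, rfl⟩ := h₁
      obtain ⟨x₂, _, rfl⟩ := h₂
      simp only at hcard
      rcases le_total x₁ x₂ with h | h
      · exact (Finset.eq_of_subset_of_card_le (hmono _ _ h) hcard.le).symm
      · exact Finset.eq_of_subset_of_card_le (hmono _ _ h) hcard.ge
  calc Set.ncard _ ≤ (Φ '' ((A '' Set.Ici y₀) ×ˢ (Bf '' Set.Icc (1 - ε) (1 + ε)))).ncard :=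
        Set.ncard_le_ncard hsub (Set.toFinite _)
    _ ≤ ((A '' Set.Ici y₀) ×ˢ (Bf '' Set.Icc (1 - ε) (1 + ε))).ncard :=
        Set.ncard_image_le (Set.toFinite _)
    _ = (A '' Set.Ici y₀).ncard * (Bf '' Set.Icc (1 - ε) (1 + ε)).ncard := by
        rw [Set.ncard_eq_toFinset_card' _, Set.ncard_eq_toFinset_card' _,
          Set.ncard_eq_toFinset_card' _, Set.toFinset_prod, Finset.card_product]
    _ ≤ (m * r + 1) * (m * r + 1) :=
        Nat.mul_le_mul (key _ _ hAanti) (key _ _ hBanti)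
    _ = (m * r + 1) ^ 2 := (sq _).symm
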